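/- arXiv:1601.05594 — 3 statements merged into one kernel-verified Lean document; each statement's English description precedes it below -/
import Mathlib

section
/- Let Γ ⊆ P_si(Σ^k) be a set of shift-invariant measures. For every ω ∈ B(Γ) with |ω| ≥ k, the word obtained by removing the last k−1 letters of ω is generated by a cycle in the essential graph G_ess(Γ); consequently B(Γ) ⊆ L(G_ess(Γ)). -/
open Finset

def occCount {A : Type*} [DecidableEq A] (k : ℕ) (ω : List A) (φ : Fin k → A) : ℕ :=
  ((Finset.range (ω.length - k + 1)).filter
    (fun i => ∀ j : Fin k, ω[i + (j : ℕ)]? = some (φ j))).card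

noncomputable def freq {A : Type*} [DecidableEq A] (k : ℕ) (ω : List A) (φ : Fin k → A) : ℝ :=
  (occCount k ω φ : ℝ) / ((ω.length - k + 1 : ℕ) : ℝ)

def IsProbVec {A : Type*} [Fintype A] {k : ℕ} (η : (Fin k → A) → ℝ) : Prop :=
  (∀ φ, 0 ≤ η φ) ∧ ∑ φ : Fin k → A, η φ = 1

def ShiftInv {A : Type*} [Fintype A] (k : ℕ) (η : (Fin (k + 2) → A) → ℝ) : Prop :=
  ∀ ψ : Fin (k + 1) → A, ∑ a : A, η (Fin.cons a ψ) = ∑ a : A, η (Fin.snoc ψ a)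

def genFrom {A V : Type*} (E : V → V → A → Prop) (ω : List A) : Prop :=
  ∃ f : Fin (ω.length + 1) → V, ∀ i : Fin ω.length, E (f i.castSucc) (f i.succ) (ω.get i)

noncomputable def capacity {A : Type*} (T : Set (List A)) : ℝ :=
  Filter.atTop.limsup fun n : ℕ =>
    Real.logb 2 (Nat.card {ω : List A // ω ∈ T ∧ ω.length = n}) / n

def memGammaEps {A : Type*} [Fintype A] [DecidableEq A] {k : ℕ}
    (Γ : Set ((Fin k → A) → ℝ)) (ε : ℝ) (η : (Fin k → A) → ℝ) : Prop :=
  IsProbVec η ∧ ∃ δ, ε < δ ∧ ∀ μ : (Fin k → A) → ℝ, IsProbVec μ → μ ∉ Γ → δ ≤ ‖η - μ‖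

/-- The labeled edge relation of the essential graph `G_ess(Γ)`: an edge from `u`
to `v` labeled `a` whenever some `η ∈ Γ` with at least one admissible word
(i.e. `η ∈ ess(Γ)`) assigns positive mass to a `k`-tuple `φ` whose
`(k-1)`-prefix is `u`, whose `(k-1)`-suffix is `v`, and whose first letter is `a`. -/
def essEdge {A : Type*} [Fintype A] [DecidableEq A] {k : ℕ}
    (Γ : Set ((Fin (k + 2) → A) → ℝ)) (u v : Fin (k + 1) → A) (a : A) : Prop :=
  ∃ η ∈ Γ, (∃ ω' : List A, k + 2 ≤ ω'.length ∧ ∀ φ, freq (k + 2) ω' φ = η φ) ∧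
    ∃ φ : Fin (k + 2) → A, 0 < η φ ∧
      u = (fun j : Fin (k + 1) => φ j.castSucc) ∧
      v = (fun j : Fin (k + 1) => φ j.succ) ∧ a = φ 0

lemma getQ_eq_get {A : Type*} {l : List A} {n : ℕ} (h : n < l.length) :
    l[n]? = some (l.get ⟨n, h⟩) := by simp [h]

lemma lemA {A : Type*} [Fintype A] [DecidableEq A] (k : ℕ)
    (η : (Fin (k + 2) → A) → ℝ) (hinv : ShiftInv k η)
    (ω : List A) (hlen : k + 2 ≤ ω.length)
    (hfreq : ∀ φ, freq (k + 2) ω φ = η φ) :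
    ∀ j : ℕ, j < k + 1 → ω[ω.length - (k + 1) + j]? = ω[j]? := by
  classical
  set n := ω.length with hn
  set m := n - (k + 1) with hmdef
  have hm1 : 1 ≤ m := by omega
  have hMn : n - (k + 2) + 1 = m := by omega
  set ψ0 : Fin (k + 1) → A := fun j => ω.get ⟨(j : ℕ), j.isLt.trans_le (by omega)⟩ with hψ0
  obtain ⟨R, hR⟩ : ∃ R : ℕ → Prop,
      R = fun i => ∀ j : Fin (k + 1), ω[i + (j : ℕ)]? = some (ψ0 j) := ⟨_, rfl⟩
  have hR0 : R 0 := by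
    simp only [hR]
    intro j
    rw [zero_add, getQ_eq_get (j.isLt.trans_le (by omega : k + 1 ≤ n))]
  -- from shift invariance: equal sums of occurrence counts
  have hsum : (∑ a : A, occCount (k + 2) ω (Fin.cons a ψ0))
      = ∑ a : A, occCount (k + 2) ω (Fin.snoc ψ0 a) := by
    have h := hinv ψ0
    simp only [← hfreq, freq, ← Finset.sum_div] at h
    have hne : ((n - (k + 2) + 1 : ℕ) : ℝ) ≠ 0 := by
      rw [hMn]; exact_mod_cast (by omega : m ≠ 0)
    have h2 := congrArg (fun x : ℝ => x * ((n - (k + 2) + 1 : ℕ) : ℝ)) h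
    have h3 := (div_left_inj' hne).mp h
    exact_mod_cast h3
  -- first sum counts occurrences of ψ0 at positions 1,…,m
  have hc1 : (∑ a : A, occCount (k + 2) ω (Fin.cons a ψ0))
      = ∑ i ∈ range m, (if R (i + 1) then 1 else 0) := by
    have key : ∀ (a : A), ∀ i ∈ range m,
        ((∀ j : Fin (k + 2), ω[i + (j : ℕ)]? = some ((Fin.cons a ψ0 : Fin (k + 2) → A) j))
          ↔ (ω[i]? = some a ∧ R (i + 1))) := by
      intro a i _
      rw [Fin.forall_fin_succ]
      simp only [Fin.cons_zero, Fin.cons_succ, Fin.val_zero, Fin.val_succ, add_zero, hR]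
      refine and_congr Iff.rfl ⟨fun h j => ?_, fun h j => ?_⟩
      · rw [show i + 1 + (j : ℕ) = i + ((j : ℕ) + 1) by omega]; exact h j
      · rw [show i + ((j : ℕ) + 1) = i + 1 + (j : ℕ) by omega]; exact h j
    calc (∑ a : A, occCount (k + 2) ω (Fin.cons a ψ0))
        = ∑ a : A, ∑ i ∈ range m,
            (if ω[i]? = some a ∧ R (i + 1) then 1 else 0) := by
          refine Finset.sum_congr rfl fun a _ => ?_
          rw [occCount, ← hn, hMn, Finset.card_filter]
          exact Finset.sum_congr rfl fun i hi => if_congr (key a i hi) rfl rfl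
      _ = ∑ i ∈ range m, ∑ a : A,
            (if ω[i]? = some a ∧ R (i + 1) then 1 else 0) := Finset.sum_comm
      _ = ∑ i ∈ range m, (if R (i + 1) then 1 else 0) := by
          refine Finset.sum_congr rfl fun i hi => ?_
          simp only [mem_range] at hi
          have hgi : ω[i]? = some (ω.get ⟨i, by omega⟩) := getQ_eq_get (by omega)
          by_cases hQ : R (i + 1)
          · simp only [hQ, and_true, if_true, hgi, Option.some_inj]
            simp [hQ, Finset.sum_ite_eq, Finset.filter_eq]
          · simp [hQ]
  -- second sum counts occurrences of ψ0 at positions 0,…,m-1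
  have hc2 : (∑ a : A, occCount (k + 2) ω (Fin.snoc ψ0 a))
      = ∑ i ∈ range m, (if R i then 1 else 0) := by
    have key : ∀ (a : A), ∀ i ∈ range m,
        ((∀ j : Fin (k + 2), ω[i + (j : ℕ)]? = some ((Fin.snoc ψ0 a : Fin (k + 2) → A) j))
          ↔ (ω[i + (k + 1)]? = some a ∧ R i)) := by
      intro a i _
      rw [Fin.forall_fin_succ']
      simp only [Fin.snoc_castSucc, Fin.snoc_last, Fin.coe_castSucc, Fin.val_last, hR]
      exact and_comm
    calc (∑ a : A, occCount (k + 2) ω (Fin.snoc ψ0 a))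
        = ∑ a : A, ∑ i ∈ range m,
            (if ω[i + (k + 1)]? = some a ∧ R i then 1 else 0) := by
          refine Finset.sum_congr rfl fun a _ => ?_
          rw [occCount, ← hn, hMn, Finset.card_filter]
          exact Finset.sum_congr rfl fun i hi => if_congr (key a i hi) rfl rfl
      _ = ∑ i ∈ range m, ∑ a : A,
            (if ω[i + (k + 1)]? = some a ∧ R i then 1 else 0) := Finset.sum_comm
      _ = ∑ i ∈ range m, (if R i then 1 else 0) := by
          refine Finset.sum_congr rfl fun i hi => ?_
          simp only [mem_range] at hi
          have hgi : ω[i + (k + 1)]? = some (ω.get ⟨i + (k + 1), by omega⟩) :=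
            getQ_eq_get (by omega)
          by_cases hQ : R i
          · simp only [hQ, and_true, if_true, hgi, Option.some_inj]
            simp [hQ, Finset.sum_ite_eq, Finset.filter_eq]
          · simp [hQ]
  -- conclude R m
  have hRm : R m := by
    have e1 : ∑ i ∈ range (m + 1), (if R i then 1 else 0)
        = (∑ i ∈ range m, (if R i then 1 else 0)) + (if R m then 1 else 0) :=
      Finset.sum_range_succ _ m
    have e2 : ∑ i ∈ range (m + 1), (if R i then 1 else 0)
        = (∑ i ∈ range m, (if R (i + 1) then 1 else 0)) + (if R 0 then 1 else 0) :=
      Finset.sum_range_succ' _ m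
    rw [hc1] at hsum
    rw [hc2] at hsum
    by_contra hnot
    rw [e2] at e1
    rw [if_pos hR0, if_neg hnot, hsum] at e1
    omega
  intro j hj
  rw [hR] at hRm
  have := hRm ⟨j, hj⟩
  rw [this, getQ_eq_get (by omega : j < n)]

-- helper: equal indices give equal list entries
lemma getCongr {A : Type*} (ω : List A) (x y : ℕ) (hx : x < ω.length) (hy : y < ω.length)
    (h : x = y) : ω.get ⟨x, hx⟩ = ω.get ⟨y, hy⟩ := by subst h; rfl

lemma lemB {A : Type*} [Fintype A] [DecidableEq A] (k : ℕ)
    (η : (Fin (k + 2) → A) → ℝ) (hinv : ShiftInv k η)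
    (ω : List A) (hlen : k + 2 ≤ ω.length)
    (hfreq : ∀ φ, freq (k + 2) ω φ = η φ) :
    ∀ x, x < ω.length → ω[x]? = ω[x % (ω.length - (k + 1))]? := by
  have hper := lemA k η hinv ω hlen hfreq
  set n := ω.length with hn
  set m := n - (k + 1) with hm
  have hm1 : 1 ≤ m := by omega
  intro x
  induction x using Nat.strong_induction_on with
  | _ x ih =>
    intro hx
    by_cases hxm : x < m
    · rw [Nat.mod_eq_of_lt hxm]
    · have h1 : x - m < k + 1 := by omega
      have h2 : x = m + (x - m) := by omega
      calc ω[x]? = ω[m + (x - m)]? := by rw [← h2]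
        _ = ω[x - m]? := hper _ h1
        _ = ω[(x - m) % m]? := ih _ (by omega) (by omega)
        _ = ω[x % m]? := by
            congr 1
            conv_rhs => rw [h2]
            rw [Nat.add_mod_left]

theorem stmt15 {A : Type*} [Fintype A] [DecidableEq A] (k : ℕ)
    (Γ : Set ((Fin (k + 2) → A) → ℝ))
    (hΓ : ∀ η ∈ Γ, IsProbVec η ∧ ShiftInv k η)
    (ω : List A) (hlen : k + 2 ≤ ω.length) (hmem : freq (k + 2) ω ∈ Γ) :
    (∃ f : Fin ((ω.take (ω.length - (k + 1))).length + 1) → (Fin (k + 1) → A),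
      (∀ i : Fin (ω.take (ω.length - (k + 1))).length,
        essEdge Γ (f i.castSucc) (f i.succ) ((ω.take (ω.length - (k + 1))).get i)) ∧
      f 0 = f (Fin.last _)) ∧
    genFrom (essEdge Γ) ω := by
  classical
  have hprob := hΓ _ hmem
  have hinv := hprob.2
  set n := ω.length with hn
  set m := n - (k + 1) with hmdef
  have hm1 : 1 ≤ m := by omega
  have hmod := lemB k _ hinv ω hlen (fun φ => rfl)
  have hWlt : ∀ x : ℕ, x % m < n := fun x => (Nat.mod_lt _ (by omega)).trans_le (by omega)
  set W : ℕ → (Fin (k + 1) → A) := fun i j => ω.get ⟨(i + (j : ℕ)) % m, hWlt _⟩ with hW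
  -- the universal edge claim
  have hedge : ∀ i : ℕ, essEdge Γ (W i) (W (i + 1)) (ω.get ⟨i % m, hWlt i⟩) := by
    intro i
    refine ⟨freq (k + 2) ω, hmem, ⟨ω, hlen, fun φ => rfl⟩,
      fun j : Fin (k + 2) => ω.get ⟨(i + (j : ℕ)) % m, hWlt _⟩, ?_, ?_, ?_, ?_⟩
    · -- positive frequency: the window occurs at position i % m
      have hocc : 0 < occCount (k + 2) ω
          (fun j : Fin (k + 2) => ω.get ⟨(i + (j : ℕ)) % m, hWlt _⟩) := by
        rw [occCount, Finset.card_pos]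
        refine ⟨i % m, Finset.mem_filter.mpr ⟨Finset.mem_range.mpr ?_, ?_⟩⟩
        · have := Nat.mod_lt i (show 0 < m by omega)
          omega
        · intro j
          have hlt2 : i % m + (j : ℕ) < n := by
            have h1 := Nat.mod_lt i (show 0 < m by omega)
            have h2 := j.isLt
            omega
          calc ω[i % m + (j : ℕ)]?
              = ω[(i % m + (j : ℕ)) % m]? := hmod _ hlt2
            _ = ω[(i + (j : ℕ)) % m]? := by rw [Nat.mod_add_mod]
            _ = some (ω.get ⟨(i + (j : ℕ)) % m, hWlt _⟩) := getQ_eq_get _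
      rw [← (fun φ => rfl : ∀ φ, freq (k + 2) ω φ = freq (k + 2) ω φ) _]
      rw [freq]
      apply div_pos
      · exact_mod_cast hocc
      · have : n - (k + 2) + 1 = m := by omega
        rw [← hn, this]
        exact_mod_cast (by omega : 0 < m)
    · funext j
      exact getCongr ω _ _ _ _ rfl
    · funext j
      exact getCongr ω _ _ _ _ (by rw [show i + 1 + (j : ℕ) = i + ((j : ℕ) + 1) by omega]; rfl)
    · exact getCongr ω _ _ _ _ (by norm_num)
  have htklen : (ω.take (n - (k + 1))).length = m := by
    rw [List.length_take]; omega
  constructor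
  · -- the cycle on the truncated word
    refine ⟨fun i => W (i : ℕ), fun i => ?_, ?_⟩
    · have hi : (i : ℕ) < m := i.isLt.trans_le (List.length_take_le _ _)
      have hlab : (ω.take (n - (k + 1))).get i = ω.get ⟨(i : ℕ) % m, hWlt _⟩ := by
        have h1 : ((ω.take (n - (k + 1))).get i : A) = ω.get ⟨(i : ℕ), by omega⟩ := by
          have := List.getElem?_take_of_lt (show (i : ℕ) < n - (k + 1) by omega) (l := ω)
          rw [getQ_eq_get i.isLt, getQ_eq_get (show (i : ℕ) < n by omega)] at this
          exact Option.some_injective _ this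
        rw [h1]
        exact getCongr ω _ _ _ _ (by rw [Nat.mod_eq_of_lt hi])
      rw [hlab]
      exact hedge (i : ℕ)
    · funext j
      exact getCongr ω _ _ _ _ (by
        show ((0 : ℕ) + (j : ℕ)) % m = ((Fin.last (ω.take (n - (k + 1))).length : ℕ) + (j : ℕ)) % m
        rw [Fin.val_last, htklen, zero_add, Nat.add_mod_left])
  · -- the full word is generated
    refine ⟨fun i => W (i : ℕ), fun i => ?_⟩
    have hlab : ω.get i = ω.get ⟨(i : ℕ) % m, hWlt _⟩ := by
      have h2 := hmod (i : ℕ) i.isLt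
      rw [getQ_eq_get i.isLt, getQ_eq_get (hWlt _)] at h2
      exact Option.some_injective _ h2
    rw [hlab]
    exact hedge (i : ℕ)
end

section
/- Let Γ ⊆ P_si(Σ^k) be a convex set of shift-invariant measures with B(Γ) nonempty. If there exists ω ∈ B(Γ) with |ω| ≥ k, then B(Γ) is infinite; specifically, writing ω = αβ with β its (k−1)-suffix, the word α^n β lies in B(Γ) for every n ≥ 1, and hence cap(B(Γ)) ≥ 0. -/
open Finset

-- counting lemma: card {i < n*a : P (i % a)} = n * card {r < a : P r}
lemma count_mod (a : ℕ) (P : ℕ → Prop) [DecidablePred P] (n : ℕ) :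
    ((range (n * a)).filter (fun i => P (i % a))).card
      = n * ((range a).filter P).card := by
  induction n with
  | zero => simp
  | succ n ih =>
    have : (n + 1) * a = n * a + a := by ring
    rw [this, Finset.range_add, Finset.filter_union,
      Finset.card_union_of_disjoint, ih, Finset.filter_map, Finset.card_map]
    · have : Finset.filter ((fun i => P (i % a)) ∘ ⇑(addLeftEmbedding (n * a))) (range a)
          = Finset.filter P (range a) := by
        apply Finset.filter_congr
        intro x hx
        simp only [Finset.mem_range] at hx
        simp only [Function.comp, addLeftEmbedding_apply]
        rw [show n * a + x = a * n + x by ring, Nat.mul_add_mod, Nat.mod_eq_of_lt hx]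
      rw [this]; ring
    · rw [Finset.disjoint_left]
      intro x hx hx'
      simp only [Finset.mem_filter, Finset.mem_range, Finset.mem_map,
        addLeftEmbedding_apply] at hx hx'
      obtain ⟨⟨y, hy, rfl⟩, -⟩ := hx'
      omega


section
variable {A : Type*} [Fintype A] [DecidableEq A] (k : ℕ) (ω : List A)

-- sum over first letter
lemma cons_sum (hlen : k + 2 ≤ ω.length) (ψ : Fin (k+1) → A) :
    ∑ x : A, occCount (k+2) ω (Fin.cons x ψ)
      = ((range (ω.length - (k+1))).filter
          (fun i => ∀ j : Fin (k+1), ω[i + 1 + (j:ℕ)]? = some (ψ j))).card := by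
  set a := ω.length - (k+1) with ha
  have hd : ω.length - (k+2) + 1 = a := by omega
  unfold occCount
  rw [hd]
  rw [← Finset.card_biUnion]
  · congr 1
    ext i
    simp only [Finset.mem_biUnion, Finset.mem_filter, Finset.mem_range, Finset.mem_univ,
      true_and]
    constructor
    · rintro ⟨x, hi, hx⟩
      refine ⟨hi, fun j => ?_⟩
      have := hx j.succ
      simpa [Fin.cons_succ, show i + ((j:ℕ)+1) = i + 1 + (j:ℕ) by ring] using this
    · rintro ⟨hi, hall⟩
      have hiL : i < ω.length := by omega
      refine ⟨ω.get ⟨i, hiL⟩, hi, ?_⟩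
      intro j
      refine Fin.cases ?_ ?_ j
      · simpa using (List.getElem?_eq_getElem hiL)
      · intro j'
        have := hall j'
        simpa [Fin.cons_succ, show i + ((j':ℕ)+1) = i + 1 + (j':ℕ) by ring] using this
  · intro x _ y _ hxy
    rw [Function.onFun, Finset.disjoint_left]
    intro i hi hi'
    simp only [Finset.mem_filter] at hi hi'
    have h1 := hi.2 0
    have h2 := hi'.2 0
    simp [Fin.cons_zero] at h1 h2
    exact hxy (by rw [← Option.some_inj, ← h1, ← h2])

lemma snoc_sum (hlen : k + 2 ≤ ω.length) (ψ : Fin (k+1) → A) :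
    ∑ x : A, occCount (k+2) ω (Fin.snoc ψ x)
      = ((range (ω.length - (k+1))).filter
          (fun i => ∀ j : Fin (k+1), ω[i + (j:ℕ)]? = some (ψ j))).card := by
  set a := ω.length - (k+1) with ha
  have hd : ω.length - (k+2) + 1 = a := by omega
  unfold occCount
  rw [hd]
  rw [← Finset.card_biUnion]
  · congr 1
    ext i
    simp only [Finset.mem_biUnion, Finset.mem_filter, Finset.mem_range, Finset.mem_univ,
      true_and]
    constructor
    · rintro ⟨x, hi, hx⟩
      refine ⟨hi, fun j => ?_⟩
      have := hx j.castSucc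
      simpa [Fin.snoc_castSucc] using this
    · rintro ⟨hi, hall⟩
      have hiL : i + (k+1) < ω.length := by omega
      refine ⟨ω.get ⟨i + (k+1), hiL⟩, hi, ?_⟩
      intro j
      refine Fin.lastCases ?_ ?_ j
      · simpa [Fin.snoc_last] using (List.getElem?_eq_getElem hiL)
      · intro j'
        have := hall j'
        simpa [Fin.snoc_castSucc] using this
  · intro x _ y _ hxy
    rw [Function.onFun, Finset.disjoint_left]
    intro i hi hi'
    simp only [Finset.mem_filter] at hi hi'
    have h1 := hi.2 (Fin.last (k+1))
    have h2 := hi'.2 (Fin.last (k+1))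
    simp [Fin.snoc_last] at h1 h2
    exact hxy (by rw [← Option.some_inj, ← h1, ← h2])

end

section
variable {A : Type*} [Fintype A] [DecidableEq A] {k : ℕ} {ω : List A}

lemma pref_suff (hlen : k + 2 ≤ ω.length) (hsi : ShiftInv k (freq (k+2) ω)) :
    ∀ j : ℕ, j < k + 1 → ω[ω.length - (k+1) + j]? = ω[j]? := by
  set a := ω.length - (k+1) with ha
  have ha1 : 1 ≤ a := by omega
  have hd : ω.length - (k+2) + 1 = a := by omega
  have hN : ∀ ψ : Fin (k+1) → A,
      ((range a).filter (fun i => ∀ j : Fin (k+1), ω[i + 1 + (j:ℕ)]? = some (ψ j))).card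
        = ((range a).filter (fun i => ∀ j : Fin (k+1), ω[i + (j:ℕ)]? = some (ψ j))).card := by
    intro ψ
    have h := hsi ψ
    simp only [freq, hd] at h
    rw [← Finset.sum_div, ← Finset.sum_div, div_eq_div_iff (by positivity) (by positivity)] at h
    have h' : (∑ x : A, occCount (k+2) ω (Fin.cons x ψ))
        = ∑ x : A, occCount (k+2) ω (Fin.snoc ψ x) := by
      have := mul_right_cancel₀ (b := (a:ℝ)) (by positivity) h
      exact_mod_cast this
    rw [cons_sum k ω hlen ψ, snoc_sum k ω hlen ψ] at h'
    exact h'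
  intro j hj
  have hjL : j < ω.length := by omega
  set ψ : Fin (k+1) → A := fun j => ω.get ⟨(j:ℕ), by omega⟩ with hψ
  have hAt0 : ∀ j' : Fin (k+1), ω[0 + (j':ℕ)]? = some (ψ j') := by
    intro j'
    rw [zero_add]
    exact List.getElem?_eq_getElem (by omega)
  set At : ℕ → Prop := fun p => ∀ j' : Fin (k+1), ω[p + (j':ℕ)]? = some (ψ j') with hAt
  have h1 : ((range (a+1)).filter At).card
      = ((range a).filter At).card + (if At a then 1 else 0) := by
    rw [Finset.range_add_one, Finset.filter_insert]
    by_cases haa : At a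
    · rw [if_pos haa, if_pos haa,
        Finset.card_insert_of_notMem (fun h => by simpa using (Finset.mem_filter.mp h).1)]
    · rw [if_neg haa, if_neg haa, add_zero]
  have h2 : ((range (a+1)).filter At).card
      = ((range a).filter (fun i => At (i+1))).card + (if At 0 then 1 else 0) := by
    have himg : ((range (a+1)).filter At).filter (fun p => p ≠ 0)
        = ((range a).filter (fun i => At (i+1))).image (· + 1) := by
      ext p
      simp only [Finset.mem_filter, Finset.mem_range, Finset.mem_image]
      constructor
      · rintro ⟨⟨hp, hAtp⟩, hp0⟩
        exact ⟨p - 1, ⟨by omega, by rwa [show p - 1 + 1 = p by omega]⟩, by omega⟩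
      · rintro ⟨i, ⟨hi, hAti⟩, rfl⟩
        exact ⟨⟨by omega, hAti⟩, by omega⟩
    have hsplit := Finset.card_filter_add_card_filter_not
      (s := (range (a+1)).filter At) (fun p => p ≠ 0)
    rw [himg, Finset.card_image_of_injective _ (add_left_injective 1)] at hsplit
    have hzero : (((range (a+1)).filter At).filter (fun p => ¬ p ≠ 0)).card
        = if At 0 then 1 else 0 := by
      by_cases h0 : At 0
      · rw [if_pos h0]
        rw [show (((range (a+1)).filter At).filter (fun p => ¬ p ≠ 0)) = {0} from ?_]
        · simp
        · ext p
          simp only [Finset.mem_filter, Finset.mem_range, Finset.mem_singleton, not_not]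
          constructor
          · rintro ⟨-, rfl⟩; rfl
          · rintro rfl; exact ⟨⟨by omega, h0⟩, rfl⟩
      · rw [if_neg h0, Finset.card_eq_zero]
        ext p
        simp only [Finset.mem_filter, not_not, Finset.notMem_empty, iff_false]
        rintro ⟨⟨-, hAtp⟩, rfl⟩
        exact h0 hAtp
    omega
  have hA0 : At 0 := hAt0
  have hAa : At a := by
    by_contra hAa
    rw [if_neg hAa, add_zero] at h1
    rw [if_pos hA0] at h2
    have e1 : ((range a).filter (fun i => At (i+1))).card
        = ((range a).filter (fun i => ∀ j : Fin (k+1), ω[i + 1 + (j:ℕ)]? = some (ψ j))).card := rfl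
    have e2 : ((range a).filter At).card
        = ((range a).filter (fun i => ∀ j : Fin (k+1), ω[i + (j:ℕ)]? = some (ψ j))).card := rfl
    have hc := hN ψ
    omega
  have h := hAa ⟨j, hj⟩
  rw [show ((⟨j, hj⟩ : Fin (k+1)) : ℕ) = j from rfl] at h
  rw [h]
  exact (List.getElem?_eq_getElem hjL).symm

end

section
variable {A : Type*} [Fintype A] [DecidableEq A] {k : ℕ} {ω : List A}

lemma per_get (hlen : k + 2 ≤ ω.length)
    (hps : ∀ j : ℕ, j < k + 1 → ω[ω.length - (k+1) + j]? = ω[j]?) :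
    ∀ i : ℕ, i < ω.length → ω[i]? = ω[i % (ω.length - (k+1))]? := by
  set a := ω.length - (k+1) with ha
  have ha1 : 1 ≤ a := by omega
  intro i
  induction i using Nat.strong_induction_on with
  | _ i ih =>
    intro hi
    by_cases hia : i < a
    · rw [Nat.mod_eq_of_lt hia]
    · push_neg at hia
      have h1 : ω[i]? = ω[i - a]? := by
        have := hps (i - a) (by omega)
        rwa [show a + (i - a) = i by omega] at this
      rw [h1, ih (i - a) (by omega) (by omega), Nat.mod_eq_sub_mod hia]

lemma s_length (n : ℕ) :
    ((List.replicate n (ω.take (ω.length - (k + 1)))).flatten ++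
        ω.drop (ω.length - (k + 1))).length
      = n * (ω.take (ω.length - (k+1))).length + (ω.length - (ω.length - (k+1))) := by
  simp [List.length_flatten, List.map_replicate, List.sum_replicate, mul_comm]

lemma s_get (hlen : k + 2 ≤ ω.length)
    (hps : ∀ j : ℕ, j < k + 1 → ω[ω.length - (k+1) + j]? = ω[j]?) (n : ℕ) :
    ∀ i : ℕ, i < n * (ω.length - (k+1)) + (k+1) →
      ((List.replicate n (ω.take (ω.length - (k + 1)))).flatten ++
        ω.drop (ω.length - (k + 1)))[i]? = ω[i % (ω.length - (k+1))]? := by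
  set a := ω.length - (k+1) with ha
  have ha1 : 1 ≤ a := by omega
  have hta : (ω.take a).length = a := by
    rw [List.length_take]; omega
  show ∀ i : ℕ, i < n * a + (k+1) →
      ((List.replicate n (ω.take a)).flatten ++ ω.drop a)[i]? = ω[i % a]?
  induction n with
  | zero =>
    intro i hi
    rw [show (List.replicate 0 (ω.take a)).flatten ++ ω.drop a = ω.drop a by simp]
    rw [List.getElem?_drop]
    have h1 : ω[a + i]? = ω[i]? := hps i (by omega)
    rw [h1]
    exact per_get hlen hps i (by omega)
  | succ n ih =>
    intro i hi
    rw [List.replicate_succ, List.flatten_cons, List.append_assoc]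
    by_cases hia : i < a
    · rw [List.getElem?_append_left (by rwa [hta]), List.getElem?_take_of_lt hia, Nat.mod_eq_of_lt hia]
    · push_neg at hia
      have hna : (n+1) * a = n * a + a := by ring
      rw [List.getElem?_append_right (by rwa [hta]), hta]
      rw [ih (i - a) (by omega), Nat.mod_eq_sub_mod hia]

lemma s_freq (hlen : k + 2 ≤ ω.length)
    (hps : ∀ j : ℕ, j < k + 1 → ω[ω.length - (k+1) + j]? = ω[j]?)
    (n : ℕ) (hn : 1 ≤ n) :
    freq (k+2) ((List.replicate n (ω.take (ω.length - (k + 1)))).flatten ++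
        ω.drop (ω.length - (k + 1)))
      = freq (k+2) ω := by
  set a := ω.length - (k+1) with ha
  have ha1 : 1 ≤ a := by omega
  set s := (List.replicate n (ω.take a)).flatten ++ ω.drop a with hs
  have hna : 1 ≤ n * a := Nat.one_le_iff_ne_zero.mpr (by positivity)
  have hslen : s.length = n * a + (k+1) := by
    rw [hs, s_length, List.length_take, Nat.min_eq_left (by omega), ← ha]
    omega
  have hd1 : s.length - (k+2) + 1 = n * a := by rw [hslen]; omega
  have hd2 : ω.length - (k+2) + 1 = a := by omega
  have hocc : ∀ φ : Fin (k+2) → A, occCount (k+2) s φ = n * occCount (k+2) ω φ := by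
    intro φ
    unfold occCount
    rw [hd1, hd2,
      ← count_mod a (fun r => ∀ j : Fin (k+2), ω[r + (j:ℕ)]? = some (φ j)) n]
    congr 1
    apply Finset.filter_congr
    intro i hi
    simp only [Finset.mem_range] at hi
    have key : ∀ j : Fin (k+2), s[i + (j:ℕ)]? = ω[(i % a) + (j:ℕ)]? := by
      intro j
      have hj := j.isLt
      have h1 : s[i + (j:ℕ)]? = ω[(i + (j:ℕ)) % a]? :=
        s_get hlen hps n (i + (j:ℕ)) (by rw [← ha]; omega)
      have h2 : ω[(i % a) + (j:ℕ)]? = ω[((i % a) + (j:ℕ)) % a]? :=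
        per_get hlen hps _ (by have := Nat.mod_lt i (show 0 < a by omega); omega)
      rw [h1, h2, Nat.mod_add_mod]
    simp only [key]
  funext φ
  unfold freq
  rw [hocc φ, hd1, hd2]
  push_cast
  rw [mul_div_mul_left _ _ (Nat.cast_ne_zero.mpr (by omega))]

end

lemma logb_nat_nonneg (m : ℕ) : 0 ≤ Real.logb 2 (m : ℝ) := by
  rcases Nat.eq_zero_or_pos m with h | h
  · simp [h, Real.logb]
  · exact Real.logb_nonneg one_lt_two (by exact_mod_cast h)

theorem stmt17 {A : Type*} [Fintype A] [DecidableEq A] (k : ℕ)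
    (Γ : Set ((Fin (k + 2) → A) → ℝ))
    (hΓ : ∀ η ∈ Γ, IsProbVec η ∧ ShiftInv k η) (hconv : Convex ℝ Γ)
    (ω : List A) (hlen : k + 2 ≤ ω.length) (hmem : freq (k + 2) ω ∈ Γ) :
    (∀ n : ℕ, 1 ≤ n →
      k + 2 ≤ ((List.replicate n (ω.take (ω.length - (k + 1)))).flatten ++
          ω.drop (ω.length - (k + 1))).length ∧
      freq (k + 2) ((List.replicate n (ω.take (ω.length - (k + 1)))).flatten ++
          ω.drop (ω.length - (k + 1))) ∈ Γ) ∧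
    {ω' : List A | k + 2 ≤ ω'.length ∧ freq (k + 2) ω' ∈ Γ}.Infinite ∧
    0 ≤ capacity {ω' : List A | k + 2 ≤ ω'.length ∧ freq (k + 2) ω' ∈ Γ} := by
  obtain ⟨-, hsi⟩ := hΓ _ hmem
  have hps : ∀ j : ℕ, j < k + 1 → ω[ω.length - (k+1) + j]? = ω[j]? :=
    pref_suff hlen hsi
  have ha1 : 1 ≤ ω.length - (k+1) := by omega
  have hmain : ∀ n : ℕ, 1 ≤ n →
      k + 2 ≤ ((List.replicate n (ω.take (ω.length - (k + 1)))).flatten ++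
          ω.drop (ω.length - (k + 1))).length ∧
      freq (k + 2) ((List.replicate n (ω.take (ω.length - (k + 1)))).flatten ++
          ω.drop (ω.length - (k + 1))) ∈ Γ := by
    intro n hn
    constructor
    · rw [s_length, List.length_take, Nat.min_eq_left (by omega)]
      have h1 : 1 ≤ n * (ω.length - (k+1)) := Nat.one_le_iff_ne_zero.mpr (by positivity)
      omega
    · rw [s_freq hlen hps n hn]
      exact hmem
  refine ⟨hmain, ?_, ?_⟩
  · apply Set.infinite_of_injective_forall_mem
      (f := fun m : ℕ => (List.replicate (m+1) (ω.take (ω.length - (k + 1)))).flatten ++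
          ω.drop (ω.length - (k + 1)))
    · intro m m' hmm'
      have h1 := congrArg List.length hmm'
      rw [s_length, s_length, List.length_take, Nat.min_eq_left (by omega)] at h1
      have h2 : (m+1) * (ω.length - (k+1)) = (m'+1) * (ω.length - (k+1)) := by omega
      have h3 := Nat.eq_of_mul_eq_mul_right (show 0 < ω.length - (k+1) by omega) h2
      omega
    · intro m
      exact ⟨(hmain (m+1) (by omega)).1, (hmain (m+1) (by omega)).2⟩
  · unfold capacity
    rw [Filter.limsup_eq]
    apply Real.sInf_nonneg
    intro x hx
    simp only [Set.mem_setOf_eq] at hx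
    obtain ⟨n, hn⟩ := hx.exists
    refine le_trans ?_ hn
    apply div_nonneg _ (Nat.cast_nonneg n)
    exact logb_nat_nonneg _
end

section
/- For the binary alphabet Σ = {0,1}, k = 2, and Γ = { μ ∈ P(Σ²) : μ(00) < 1/2, μ(11) < 1/2, μ(01) = 0 }, the set of admissible words of length ≥ 2 is exactly { 0^n 1^n : n ∈ ℕ, n ≥ 1 }, which is not a regular language. -/
open Finset

lemma wget (a b i : ℕ) :
    (List.replicate a false ++ List.replicate b true)[i]? =
      if i < a then some false else if i < a + b then some true else none := by
  rcases lt_or_ge i a with h | h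
  · rw [List.getElem?_append_left (by simpa using h)]
    simp [List.getElem?_replicate, h]
  · rw [List.getElem?_append_right (by simpa using h)]
    simp only [List.length_replicate]
    rcases lt_or_ge i (a + b) with h2 | h2
    · rw [List.getElem?_replicate, if_pos (by omega)]
      simp [if_neg (not_lt.2 h), if_pos h2]
    · rw [List.getElem?_replicate, if_neg (by omega)]
      simp [if_neg (not_lt.2 h), if_neg (not_lt.2 h2)]

lemma shape_of_no10 (ω : List Bool)
    (h : ∀ i : ℕ, ¬(ω[i]? = some true ∧ ω[i+1]? = some false)) :
    ∃ a b, ω = List.replicate a false ++ List.replicate b true := by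
  induction ω with
  | nil => exact ⟨0, 0, rfl⟩
  | cons x xs ih =>
    obtain ⟨a, b, hab⟩ := ih (fun i => by have := h (i + 1); simpa using this)
    cases x
    · exact ⟨a + 1, b, by simp [hab, List.replicate_succ]⟩
    · cases a with
      | zero => exact ⟨0, b + 1, by simp [hab, List.replicate_succ]⟩
      | succ a =>
        exact absurd ⟨by simp [hab], by simp [hab, List.replicate_succ]⟩ (h 0)

lemma occ10 (a b : ℕ) :
    occCount 2 (List.replicate a false ++ List.replicate b true) ![true, false] = 0 := by
  rw [occCount, Finset.card_eq_zero, Finset.filter_eq_empty_iff]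
  intro i _
  simp only [Fin.forall_fin_two, not_and]
  intro h0 h1
  rw [show i + ((0 : Fin 2) : ℕ) = i by rfl, wget] at h0
  rw [show i + ((1 : Fin 2) : ℕ) = i + 1 by rfl, wget] at h1
  simp only [Matrix.cons_val_zero] at h0
  simp only [Matrix.cons_val_one, Matrix.head_cons] at h1
  split_ifs at h0 h1 <;> simp_all <;> omega

lemma occ00 (a b : ℕ) :
    occCount 2 (List.replicate a false ++ List.replicate b true) ![false, false] = a - 1 := by
  rw [occCount]
  have : ((Finset.range ((List.replicate a false ++ List.replicate b true).length - 2 + 1)).filter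
      (fun i => ∀ j : Fin 2, (List.replicate a false ++ List.replicate b true)[i + (j : ℕ)]? = some (![false, false] j))) = Finset.range (a - 1) := by
    ext i
    simp only [Finset.mem_filter, Finset.mem_range, Fin.forall_fin_two]
    rw [show i + ((0 : Fin 2) : ℕ) = i by rfl, show i + ((1 : Fin 2) : ℕ) = i + 1 by rfl,
      wget, wget]
    simp only [List.length_append, List.length_replicate, Matrix.cons_val_zero,
      Matrix.cons_val_one, Matrix.head_cons]
    split_ifs <;> simp_all <;> omega
  rw [this, Finset.card_range]

lemma occ11 (a b : ℕ) :
    occCount 2 (List.replicate a false ++ List.replicate b true) ![true, true] = b - 1 := by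
  rw [occCount]
  have : ((Finset.range ((List.replicate a false ++ List.replicate b true).length - 2 + 1)).filter
      (fun i => ∀ j : Fin 2, (List.replicate a false ++ List.replicate b true)[i + (j : ℕ)]? = some (![true, true] j))) = Finset.Ico a (a + b - 1) := by
    ext i
    simp only [Finset.mem_filter, Finset.mem_range, Finset.mem_Ico, Fin.forall_fin_two]
    rw [show i + ((0 : Fin 2) : ℕ) = i by rfl, show i + ((1 : Fin 2) : ℕ) = i + 1 by rfl,
      wget, wget]
    simp only [List.length_append, List.length_replicate, Matrix.cons_val_zero,
      Matrix.cons_val_one, Matrix.head_cons]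
    split_ifs <;> simp_all <;> omega
  rw [this, Nat.card_Ico]
  omega

lemma part1 (ω : List Bool) (hlen : 2 ≤ ω.length) :
    ((freq 2 ω ![true, false] = 0 ∧ freq 2 ω ![false, false] < 1 / 2 ∧
        freq 2 ω ![true, true] < 1 / 2) ↔
      ∃ n : ℕ, 1 ≤ n ∧ ω = List.replicate n false ++ List.replicate n true) := by
  have hdpos : (0 : ℝ) < ((ω.length - 2 + 1 : ℕ) : ℝ) := by
    have : 1 ≤ ω.length - 2 + 1 := by omega
    exact_mod_cast this
  constructor
  · rintro ⟨h10, h00, h11⟩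
    -- occCount of 10 is zero
    have hocc : occCount 2 ω ![true, false] = 0 := by
      rw [freq, div_eq_zero_iff] at h10
      rcases h10 with h | h
      · exact_mod_cast h
      · exact absurd h (ne_of_gt hdpos)
    rw [occCount, Finset.card_eq_zero, Finset.filter_eq_empty_iff] at hocc
    have hno : ∀ i : ℕ, ¬(ω[i]? = some true ∧ ω[i+1]? = some false) := by
      rintro i ⟨hi0, hi1⟩
      have hlt : i + 1 < ω.length := by
        by_contra h
        rw [List.getElem?_eq_none_iff.mpr (by omega)] at hi1
        simp at hi1
      have hmem : i ∈ Finset.range (ω.length - 2 + 1) := Finset.mem_range.mpr (by omega)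
      refine hocc hmem ?_
      intro j
      fin_cases j
      · simpa using hi0
      · simpa using hi1
    obtain ⟨a, b, rfl⟩ := shape_of_no10 ω hno
    have hl : (List.replicate a false ++ List.replicate b true).length = a + b := by simp
    rw [hl] at hlen hdpos
    have ha : 1 ≤ a := by
      by_contra ha
      have ha0 : a = 0 := by omega
      rw [freq, occ11, hl, ha0] at h11
      have : ((b - 1 : ℕ) : ℝ) < 1 / 2 * ((0 + b - 2 + 1 : ℕ) : ℝ) := by
        rw [div_lt_iff₀ (by simpa [ha0] using hdpos)] at h11
        simpa [ha0] using h11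
      have : (b - 1 : ℕ) * 2 < (0 + b - 2 + 1 : ℕ) * 1 := by
        have h2 : ((b - 1 : ℕ) : ℝ) * 2 < ((0 + b - 2 + 1 : ℕ) : ℝ) * 1 := by linarith
        exact_mod_cast h2
      omega
    have hb : 1 ≤ b := by
      by_contra hb
      have hb0 : b = 0 := by omega
      rw [freq, occ00, hl, hb0] at h00
      have : ((a - 1 : ℕ) : ℝ) < 1 / 2 * ((a + 0 - 2 + 1 : ℕ) : ℝ) := by
        rw [div_lt_iff₀ (by simpa [hb0] using hdpos)] at h00
        simpa [hb0] using h00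
      have : (a - 1 : ℕ) * 2 < (a + 0 - 2 + 1 : ℕ) * 1 := by
        have h2 : ((a - 1 : ℕ) : ℝ) * 2 < ((a + 0 - 2 + 1 : ℕ) : ℝ) * 1 := by linarith
        exact_mod_cast h2
      omega
    -- now a ≤ b and b ≤ a
    rw [freq, occ00, hl, div_lt_iff₀ hdpos] at h00
    rw [freq, occ11, hl, div_lt_iff₀ hdpos] at h11
    have hab : (a - 1 : ℕ) * 2 < (a + b - 2 + 1 : ℕ) := by
      have h2 : ((a - 1 : ℕ) : ℝ) * 2 < ((a + b - 2 + 1 : ℕ) : ℝ) := by linarith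
      exact_mod_cast h2
    have hba : (b - 1 : ℕ) * 2 < (a + b - 2 + 1 : ℕ) := by
      have h2 : ((b - 1 : ℕ) : ℝ) * 2 < ((a + b - 2 + 1 : ℕ) : ℝ) := by linarith
      exact_mod_cast h2
    have : a = b := by omega
    exact ⟨a, ha, by rw [this]⟩
  · rintro ⟨n, hn, rfl⟩
    have hl : (List.replicate n false ++ List.replicate n true).length = n + n := by simp
    rw [hl] at hdpos
    refine ⟨by rw [freq, occ10]; simp, ?_, ?_⟩
    · rw [freq, occ00, hl, div_lt_iff₀ hdpos]
      have h2 : (n - 1 : ℕ) * 2 < (n + n - 2 + 1 : ℕ) := by omega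
      have h3 : ((n - 1 : ℕ) : ℝ) * 2 < ((n + n - 2 + 1 : ℕ) : ℝ) := by exact_mod_cast h2
      linarith
    · rw [freq, occ11, hl, div_lt_iff₀ hdpos]
      have h2 : (n - 1 : ℕ) * 2 < (n + n - 2 + 1 : ℕ) := by omega
      have h3 : ((n - 1 : ℕ) : ℝ) * 2 < ((n + n - 2 + 1 : ℕ) : ℝ) := by exact_mod_cast h2
      linarith

lemma part2 : ¬ Language.IsRegular (show Language Bool from
    {ω : List Bool | ∃ n : ℕ, 1 ≤ n ∧
      ω = List.replicate n false ++ List.replicate n true}) := by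
  rintro ⟨σ, hσ, M, hM⟩
  set p := Fintype.card σ with hp
  set x : List Bool := List.replicate (p + 1) false ++ List.replicate (p + 1) true with hx
  have hxmem : x ∈ M.accepts := by
    rw [hM]; exact ⟨p + 1, by omega, rfl⟩
  obtain ⟨a, b, c, hsplit, hlen2, hbne, hpump⟩ :=
    M.pumping_lemma hxmem (by simp [hx]; omega)
  have h2 : a ++ (b ++ b) ++ c ∈ M.accepts := by
    apply hpump
    refine Language.mem_mul.mpr ⟨a ++ (b ++ b), ?_, c, rfl, by simp⟩
    refine Language.mem_mul.mpr ⟨a, rfl, b ++ b, ?_, rfl⟩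
    refine Language.mem_kstar.mpr ⟨[b, b], by simp, ?_⟩
    intro y hy
    rcases List.mem_pair.mp hy with rfl | rfl <;> rfl
  rw [hM] at h2
  obtain ⟨m, hm, heq⟩ := h2
  -- a ++ b is all false
  have hfalse : ∀ y ∈ a ++ b, y = false := by
    have h1 : a ++ b = x.take (a.length + b.length) := by
      rw [hsplit]
      rw [show a ++ b ++ c = (a ++ b) ++ c from rfl]
      rw [show a.length + b.length = (a ++ b).length by simp]
      exact List.take_left.symm
    have h2 : x.take (a.length + b.length) = List.replicate (a.length + b.length) false := by
      rw [hx, List.take_append_of_le_length (by simpa using by omega : a.length + b.length ≤ (List.replicate (p+1) false).length), List.take_replicate]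
      congr 1
      omega
    intro y hy
    rw [h1, h2] at hy
    exact List.eq_of_mem_replicate hy
  have hbf : b.count false = b.length := by
    rw [List.count_eq_length]
    intro y hy
    exact (hfalse y (List.mem_append_right a hy)).symm
  have hbt : b.count true = 0 := by
    rw [List.count_eq_zero]
    intro hy
    exact absurd (hfalse true (List.mem_append_right a hy)) (by simp)
  -- counts in heq
  have hcf := congrArg (List.count false) heq
  have hct := congrArg (List.count true) heq
  have hxf := congrArg (List.count false) hsplit
  have hxt := congrArg (List.count true) hsplit
  simp [hx, List.count_append, List.count_replicate] at hcf hct hxf hxt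
  have hblen : b.length = 0 := by omega
  exact hbne (List.length_eq_zero_iff.mp hblen)

theorem stmt18 :
    (∀ ω : List Bool, 2 ≤ ω.length →
      ((freq 2 ω ![true, false] = 0 ∧ freq 2 ω ![false, false] < 1 / 2 ∧
          freq 2 ω ![true, true] < 1 / 2) ↔
        ∃ n : ℕ, 1 ≤ n ∧ ω = List.replicate n false ++ List.replicate n true)) ∧
    ¬ Language.IsRegular (show Language Bool from
        {ω : List Bool | ∃ n : ℕ, 1 ≤ n ∧
          ω = List.replicate n false ++ List.replicate n true}) :=
  ⟨part1, part2⟩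
end
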